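/- arXiv:1710.08803 — 2 statements merged into one kernel-verified Lean document; each statement's English description precedes it below -/
import Mathlib

section
/- For 0 < p₁ < p₂ < 1 and any natural number α ≥ 1, the expected return time E(p) = (p Σ_{j=0}^{α−1}(1−p)^j (j+1) + α(1−p)^α)/(1−p)^α is strictly increasing in p on (0,1); in particular E(p₁) < E(p₂). -/
lemma ert_key (q : ℝ) : ∀ α : ℕ,
    (1 - q) * ∑ j ∈ Finset.range α, q ^ j * (j + 1) + α * q ^ α
      = ∑ k ∈ Finset.range α, q ^ k := by
  intro α
  induction α with
  | zero => simp
  | succ n ih =>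
    rw [Finset.sum_range_succ, Finset.sum_range_succ]
    push_cast
    push_cast at ih
    linear_combination ih

lemma ert_reflect (q : ℝ) (hq : q ≠ 0) (α : ℕ) :
    (∑ j ∈ Finset.range α, (1 / q) ^ (j + 1)) * q ^ α
      = ∑ k ∈ Finset.range α, q ^ k := by
  rw [Finset.sum_mul, ← Finset.sum_range_reflect (fun k => q ^ k) α]
  refine Finset.sum_congr rfl fun j hj => ?_
  rw [Finset.mem_range] at hj
  rw [div_pow, one_pow, div_mul_eq_mul_div, one_mul, div_eq_mul_inv,
    ← pow_sub₀ q hq (by omega : j + 1 ≤ α)]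
  congr 1; omega

lemma ert_eq (α : ℕ) (p : ℝ) (hp1 : p < 1) :
    (p * ∑ j ∈ Finset.range α, (1 - p) ^ j * (j + 1) + α * (1 - p) ^ α) /
        (1 - p) ^ α
      = ∑ j ∈ Finset.range α, (1 / (1 - p)) ^ (j + 1) := by
  have hq : (1 : ℝ) - p ≠ 0 := by linarith
  have hk := ert_key (1 - p) α
  rw [show (1 : ℝ) - (1 - p) = p by ring] at hk
  rw [hk, ← ert_reflect (1 - p) hq α,
    mul_div_cancel_right₀ _ (pow_ne_zero _ hq)]

/-- The expected return time `E(p)` is strictly increasing in `p` on `(0,1)`;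
in particular `E(p₁) < E(p₂)` for `0 < p₁ < p₂ < 1`. -/
theorem expected_return_time_strictMono (α : ℕ) (hα : 1 ≤ α) :
    StrictMonoOn
      (fun p : ℝ =>
        (p * ∑ j ∈ Finset.range α, (1 - p) ^ j * (j + 1) + α * (1 - p) ^ α) /
          (1 - p) ^ α) (Set.Ioo (0 : ℝ) 1) ∧
    ∀ p₁ p₂ : ℝ, 0 < p₁ → p₁ < p₂ → p₂ < 1 →
      (p₁ * ∑ j ∈ Finset.range α, (1 - p₁) ^ j * (j + 1) + α * (1 - p₁) ^ α) /
          (1 - p₁) ^ α <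
        (p₂ * ∑ j ∈ Finset.range α, (1 - p₂) ^ j * (j + 1) + α * (1 - p₂) ^ α) /
          (1 - p₂) ^ α := by
  have mono : StrictMonoOn
      (fun p : ℝ =>
        (p * ∑ j ∈ Finset.range α, (1 - p) ^ j * (j + 1) + α * (1 - p) ^ α) /
          (1 - p) ^ α) (Set.Ioo (0 : ℝ) 1) := by
    intro a ha b hb hab
    simp only
    rw [ert_eq α a ha.2, ert_eq α b hb.2]
    refine Finset.sum_lt_sum_of_nonempty (Finset.nonempty_range_iff.mpr (by omega))
      fun j _ => ?_
    have h1 : (0 : ℝ) < 1 - b := by linarith [hb.2]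
    have h2 : (1 : ℝ) - b < 1 - a := by linarith
    have h3 : 1 / (1 - a) < 1 / (1 - b) := one_div_lt_one_div_of_lt h1 h2
    have h0 : (0 : ℝ) < 1 - a := by linarith
    exact pow_lt_pow_left₀ h3 (le_of_lt (one_div_pos.mpr h0)) (Nat.succ_ne_zero j)
  exact ⟨mono, fun p₁ p₂ h1 h2 h3 =>
    mono ⟨h1, by linarith⟩ ⟨by linarith, h3⟩ h2⟩
end

section
/- Define the cumulative return probability recursively by Pr(n) = 0 for n < α, Pr(α) = q^α, and Pr(n) = q^α + (n − α)·p·q^α − p·q^α·Σ_{i=0}^{n−α−1} Pr(i) for n > α, where p ∈ (0,1), q = 1 − p. Then Pr(n) is nondecreasing in n, Pr(n) ∈ [0,1] for all n, and Pr(n) → 1 as n → ∞. -/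
/-- The cumulative return probability defined by the paper's recursion is
nondecreasing, lies in `[0,1]`, and tends to `1`. -/
theorem cumulative_return_probability (p : ℝ) (hp0 : 0 < p) (hp1 : p < 1)
    (α : ℕ) (hα : 1 ≤ α) (Pr : ℕ → ℝ)
    (h0 : ∀ n, n < α → Pr n = 0)
    (h1 : Pr α = (1 - p) ^ α)
    (h2 : ∀ n, α < n →
      Pr n = (1 - p) ^ α + ((n : ℝ) - α) * p * (1 - p) ^ α -
        p * (1 - p) ^ α * ∑ i ∈ Finset.range (n - α), Pr i) :
    Monotone Pr ∧ (∀ n, 0 ≤ Pr n ∧ Pr n ≤ 1) ∧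
      Filter.Tendsto Pr Filter.atTop (nhds 1) := by
  have hq0 : (0:ℝ) < 1 - p := by linarith
  have hqa0 : (0:ℝ) < (1-p)^α := pow_pos hq0 α
  have hqa1 : (1-p)^α < 1 := pow_lt_one₀ hq0.le (by linarith) (by omega)
  have hc0 : (0:ℝ) < p * (1-p)^α := mul_pos hp0 hqa0
  have hc1 : p * (1-p)^α < 1 := by nlinarith
  have hPr0 : Pr 0 = 0 := h0 0 (by omega)
  have hgeom : ∀ N, ∑ j ∈ Finset.range N, p*(1-p)^j = 1 - (1-p)^N := by
    intro N
    induction N with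
    | zero => simp
    | succ N ih => rw [Finset.sum_range_succ, ih, pow_succ]; ring
  have step : ∀ n, α ≤ n → Pr (n+1) = Pr n + p*(1-p)^α * (1 - Pr (n - α)) := by
    intro n hn
    rcases eq_or_lt_of_le hn with h | h
    · subst h
      have e := h2 (α+1) (by omega)
      have h1' : α + 1 - α = 1 := by omega
      rw [h1', Finset.sum_range_one, hPr0] at e
      rw [e, h1, Nat.sub_self, hPr0]
      push_cast
      ring
    · have e1 := h2 n h
      have e2 := h2 (n+1) (by omega)
      have hs : n + 1 - α = (n - α) + 1 := by omega
      rw [hs, Finset.sum_range_succ] at e2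
      rw [e2, e1]
      push_cast
      ring
  have renewal : ∀ m, 1 - Pr (m + α) =
      ∑ j ∈ Finset.range α, p * (1-p)^j * (1 - Pr (m + (α - 1 - j))) := by
    intro m
    induction m using Nat.strong_induction_on with
    | _ m ih =>
      match m with
      | 0 =>
        have hz : ∀ j ∈ Finset.range α,
            p*(1-p)^j*(1 - Pr (0 + (α-1-j))) = p*(1-p)^j := by
          intro j hj
          rw [Finset.mem_range] at hj
          rw [h0 (0 + (α-1-j)) (by omega)]
          ring
        rw [Finset.sum_congr rfl hz, hgeom, zero_add, h1]
      | (k+1) =>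
        have ihk := ih k (by omega)
        have hstep1 : Pr (k+α+1) = Pr (k+α) + p*(1-p)^α*(1 - Pr k) := by
          have := step (k+α) (by omega)
          simpa using this
        have key : (∑ j ∈ Finset.range α, p*(1-p)^j * (1 - Pr (k + (α-1-j))))
            - (∑ j ∈ Finset.range α, p*(1-p)^j * (1 - Pr (k+1 + (α-1-j))))
            = p*(1-p)^α * (1 - Pr k) := by
          rw [← Finset.sum_sub_distrib]
          have hre : ∀ j ∈ Finset.range α,
              p*(1-p)^j * (1 - Pr (k + (α-1-j))) - p*(1-p)^j * (1 - Pr (k+1 + (α-1-j)))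
              = p*(1-p)^j * (Pr ((k + (α-1-j)) + 1) - Pr (k + (α-1-j))) := by
            intro j hj
            have hq : k+1 + (α-1-j) = (k + (α-1-j)) + 1 := by omega
            rw [hq]; ring
          rw [Finset.sum_congr rfl hre]
          by_cases hk : α ≤ k
          · have hterm : ∀ j ∈ Finset.range α,
                p*(1-p)^j * (Pr ((k + (α-1-j)) + 1) - Pr (k + (α-1-j)))
                = p*(1-p)^α * (p*(1-p)^j * (1 - Pr ((k-α) + (α-1-j)))) := by
              intro j hj
              rw [Finset.mem_range] at hj
              have hge : α ≤ k + (α-1-j) := by omega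
              rw [step _ hge]
              have hq2 : k + (α-1-j) - α = (k-α) + (α-1-j) := by omega
              rw [hq2]; ring
            rw [Finset.sum_congr rfl hterm, ← Finset.mul_sum]
            have ihk2 := ih (k-α) (by omega)
            have hq3 : (k-α) + α = k := by omega
            rw [hq3] at ihk2
            rw [← ihk2]
          · push_neg at hk
            have hPrk : Pr k = 0 := h0 k hk
            have hsplit : Finset.range α = Finset.range (k+1) ∪ Finset.Ico (k+1) α := by
              simp only [Finset.range_eq_Ico]
              exact (Finset.Ico_union_Ico_eq_Ico (by omega) (by omega)).symm
            rw [hsplit, Finset.sum_union (by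
              simp only [Finset.disjoint_left, Finset.mem_range, Finset.mem_Ico]
              intro a ha hb; omega)]
            have hzero : ∀ j ∈ Finset.Ico (k+1) α,
                p*(1-p)^j * (Pr ((k + (α-1-j)) + 1) - Pr (k + (α-1-j))) = 0 := by
              intro j hj
              rw [Finset.mem_Ico] at hj
              rw [h0 ((k + (α-1-j)) + 1) (by omega), h0 (k + (α-1-j)) (by omega)]
              ring
            rw [Finset.sum_congr rfl hzero, Finset.sum_const_zero, add_zero]
            rw [Finset.sum_range_succ]
            have hlast : k + (α-1-k) = α - 1 := by omega
            rw [hlast]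
            have hA : Pr (α-1) = 0 := h0 (α-1) (by omega)
            have hA1 : α - 1 + 1 = α := by omega
            rw [hA1, hA, h1]
            have hmid : ∀ j ∈ Finset.range k,
                p*(1-p)^j * (Pr ((k + (α-1-j)) + 1) - Pr (k + (α-1-j)))
                = p*(1-p)^α * (p*(1-p)^j) := by
              intro j hj
              rw [Finset.mem_range] at hj
              have hge : α ≤ k + (α-1-j) := by omega
              rw [step _ hge]
              have h3 : k + (α-1-j) - α = k-1-j := by omega
              rw [h3, h0 (k-1-j) (by omega)]
              ring
            rw [Finset.sum_congr rfl hmid, ← Finset.mul_sum, hgeom, hPrk]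
            ring
        have hidx : k + 1 + α = k + α + 1 := by omega
        rw [hidx, hstep1]
        linarith [key, ihk]
  have hle1 : ∀ n, Pr n ≤ 1 := by
    intro n
    induction n using Nat.strong_induction_on with
    | _ n ih =>
      by_cases hn : n < α
      · rw [h0 n hn]; linarith
      · push_neg at hn
        obtain ⟨m, rfl⟩ : ∃ m, n = m + α := ⟨n - α, by omega⟩
        have hr := renewal m
        have hnn : 0 ≤ ∑ j ∈ Finset.range α, p*(1-p)^j * (1 - Pr (m + (α-1-j))) := by
          apply Finset.sum_nonneg
          intro j hj
          rw [Finset.mem_range] at hj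
          have hih := ih (m + (α-1-j)) (by omega)
          have hpw : 0 ≤ p*(1-p)^j := mul_nonneg hp0.le (pow_nonneg hq0.le j)
          exact mul_nonneg hpw (by linarith)
        linarith
  have hmono : Monotone Pr := by
    apply monotone_nat_of_le_succ
    intro n
    by_cases hn : α ≤ n
    · rw [step n hn]
      nlinarith [hle1 (n - α), hc0]
    · push_neg at hn
      rw [h0 n hn]
      rcases eq_or_lt_of_le (show n+1 ≤ α by omega) with h | h
      · rw [h, h1]
        positivity
      · rw [h0 (n+1) h]
  have hnonneg : ∀ n, 0 ≤ Pr n := by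
    intro n
    have := hmono (Nat.zero_le n)
    rw [hPr0] at this
    exact this
  have hdecay : ∀ k, 1 - Pr (α + k) ≤ (1 - p*(1-p)^α)^k := by
    intro k
    induction k with
    | zero =>
      simp only [Nat.add_zero, pow_zero, h1]
      linarith
    | succ k ihk =>
      have hs := step (α + k) (by omega)
      have hsub : α + k - α = k := by omega
      rw [hsub] at hs
      have hm : Pr k ≤ Pr (α + k) := hmono (by omega)
      calc 1 - Pr (α + (k+1)) = (1 - Pr (α+k)) - p*(1-p)^α*(1 - Pr k) := by
            rw [show α + (k+1) = (α+k)+1 by omega, hs]; ring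
        _ ≤ (1 - p*(1-p)^α) * (1 - Pr (α+k)) := by nlinarith [hc0]
        _ ≤ (1 - p*(1-p)^α)^(k+1) := by
            rw [pow_succ]
            nlinarith [ihk, hle1 (α+k), pow_nonneg (by linarith : (0:ℝ) ≤ 1 - p*(1-p)^α) k]
  have hlim : Filter.Tendsto Pr Filter.atTop (nhds 1) := by
    have hten : Filter.Tendsto (fun k => (1 - p*(1-p)^α)^k) Filter.atTop (nhds 0) :=
      tendsto_pow_atTop_nhds_zero_of_lt_one (by linarith) (by linarith)
    have hsq : Filter.Tendsto (fun n => 1 - Pr n) Filter.atTop (nhds 0) := by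
      apply tendsto_of_tendsto_of_tendsto_of_le_of_le' tendsto_const_nhds
        (hten.comp (Filter.tendsto_sub_atTop_nat α))
      · exact Filter.Eventually.of_forall (fun n => by linarith [hle1 n])
      · filter_upwards [Filter.eventually_ge_atTop α] with n hn
        have := hdecay (n - α)
        rwa [show α + (n - α) = n by omega] at this
    have := hsq.const_sub 1
    simpa using this
  exact ⟨hmono, fun n => ⟨hnonneg n, hle1 n⟩, hlim⟩
end
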